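/- Let (W,S) be a Coxeter system with exactly one bad 5-edge. Let B be a bad separator of S with head A = {a,b,c}, eyes {a,b}, and good focus f; let D = {a,b} ∪ A^⊥. Then the connected component of Γ(W,S) − B containing f equals the connected component of Γ(W,S) − D containing f. -/

import Mathlib

/-- A simple graph is *chordal* if every cycle of length at least four has a chord,
that is, an edge of the graph joining two vertices of the cycle that is not an
edge of the cycle. -/
def SimpleGraph.IsChordal {V : Type*} (G : SimpleGraph V) : Prop :=
  ∀ ⦃v : V⦄ (w : G.Walk v v), w.IsCycle → 4 ≤ w.length →
    ∃ a b, a ∈ w.support ∧ b ∈ w.support ∧ G.Adj a b ∧ s(a, b) ∉ w.edges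

/-- `B` is a `(c,f)`-separator of `G`: `c, f ∉ B` and `c` and `f` lie in different
connected components of the induced subgraph `G − B`. -/
def SimpleGraph.IsSeparator {V : Type*} (G : SimpleGraph V) (c f : V) (Bs : Set V) : Prop :=
  ∃ (hc : c ∈ Bsᶜ) (hf : f ∈ Bsᶜ), ¬ (G.induce Bsᶜ).Reachable ⟨c, hc⟩ ⟨f, hf⟩

/-- `B` is a minimal `(c,f)`-separator: no proper subset of `B` is a `(c,f)`-separator. -/
def SimpleGraph.IsMinSeparator {V : Type*} (G : SimpleGraph V) (c f : V) (Bs : Set V) : Prop :=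
  G.IsSeparator c f Bs ∧ ∀ Bs' ⊂ Bs, ¬ G.IsSeparator c f Bs'

/-- `u` and `g` lie in the same connected component of `G − B`. -/
def SimpleGraph.InSepComp {V : Type*} (G : SimpleGraph V) (Bs : Set V) (u g : V) : Prop :=
  ∃ (hu : u ∈ Bsᶜ) (hg : g ∈ Bsᶜ), (G.induce Bsᶜ).Reachable ⟨u, hu⟩ ⟨g, hg⟩

namespace CoxeterMatrix

variable {B : Type*}

/-- The underlying graph of the presentation diagram of a Coxeter matrix:
vertices are the indices, and `s, t` are adjacent when `m(s,t) < ∞`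
(`0` encodes `∞`). -/
def pDiagram (M : CoxeterMatrix B) : SimpleGraph B where
  Adj s t := s ≠ t ∧ M s t ≠ 0
  symm := ⟨by intro s t h; exact ⟨h.1.symm, by rw [M.symmetric]; exact h.2⟩⟩
  loopless := ⟨by intro s h; exact h.1 rfl⟩

/-- The underlying graph of the Coxeter diagram induced on a subset `A`:
`s, t ∈ A` are adjacent when `m(s,t) > 2` (including `m(s,t) = ∞`, encoded by `0`). -/
def cDiagramOn (M : CoxeterMatrix B) (A : Set B) : SimpleGraph A where
  Adj s t := (s : B) ≠ (t : B) ∧ M s t ≠ 2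
  symm := ⟨by intro s t h; exact ⟨h.1.symm, by rw [M.symmetric]; exact h.2⟩⟩
  loopless := ⟨by intro s h; exact h.1 rfl⟩

/-- A *simplex*: a subset whose elements pairwise satisfy `m(s,t) < ∞`. -/
def IsSimplex (M : CoxeterMatrix B) (A : Set B) : Prop :=
  A.Pairwise fun s t => M s t ≠ 0

/-- A subset is *irreducible* if its Coxeter diagram is connected. -/
def IsIrreducible (M : CoxeterMatrix B) (A : Set B) : Prop :=
  (M.cDiagramOn A).Connected

def IsIrredSimplex (M : CoxeterMatrix B) (A : Set B) : Prop :=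
  M.IsSimplex A ∧ M.IsIrreducible A

/-- A maximal irreducible simplex. -/
def IsMaxIrredSimplex (M : CoxeterMatrix B) (A : Set B) : Prop :=
  M.IsIrredSimplex A ∧ ∀ A' : Set B, A ⊂ A' → ¬ M.IsIrredSimplex A'

/-- `A^⊥ = {s : m(s,a) = 2 for all a ∈ A}`. -/
def perp (M : CoxeterMatrix B) (A : Set B) : Set B :=
  {s | ∀ a ∈ A, M s a = 2}

/-- Type `G₃` (= `H₃`): labels `3, 5` on a path, other label `2`. -/
def IsTypeG3 (M : CoxeterMatrix B) (A : Set B) : Prop :=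
  ∃ a b c : B, A = {a, b, c} ∧ M a b = 3 ∧ M b c = 5 ∧ M a c = 2

/-- Type `G₄` (= `H₄`): labels `3, 3, 5` on a path, other labels `2`. -/
def IsTypeG4 (M : CoxeterMatrix B) (A : Set B) : Prop :=
  ∃ a b c d : B, A = {a, b, c, d} ∧ M a b = 3 ∧ M b c = 3 ∧ M c d = 5 ∧
    M a c = 2 ∧ M a d = 2 ∧ M b d = 2

/-- A set of *bad edges*: a symmetric set of pairs `{a,b}` with `m(a,b) ≥ 5` such that
every irreducible simplex properly containing `{a,b}` is of type `G₃` or `G₄`. -/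
def IsBadEdgeSet (M : CoxeterMatrix B) (E : B → B → Prop) : Prop :=
  (∀ a b, E a b → E b a) ∧
  (∀ a b, E a b → M a b = 0 ∨ 5 ≤ M a b) ∧
  (∀ a b, E a b → ∀ A : Set B, M.IsIrredSimplex A → ({a, b} : Set B) ⊂ A →
    M.IsTypeG3 A ∨ M.IsTypeG4 A)

/-- A *bad* irreducible simplex: an irreducible simplex containing a bad edge. -/
def IsBadSimplex (M : CoxeterMatrix B) (E : B → B → Prop) (A : Set B) : Prop :=
  M.IsIrredSimplex A ∧ ∃ a ∈ A, ∃ b ∈ A, E a b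

/-- A *bad separator*: a subset `Bs` containing a pair of eyes `a, b` with `m(a,b) = 2`,
with a bad focus `c ∉ Bs` making `{a,b,c}` a bad maximal irreducible simplex,
`Bs ⊆ {a,b} ∪ {a,b,c}^⊥`, and with a good focus `f ∉ Bs` making `Bs` a minimal
`(c,f)`-separator of the presentation diagram. -/
def IsBadSeparator (M : CoxeterMatrix B) (E : B → B → Prop) (Bs : Set B) : Prop :=
  ∃ a b c : B, a ∈ Bs ∧ b ∈ Bs ∧ M a b = 2 ∧ c ∉ Bs ∧
    M.IsMaxIrredSimplex {a, b, c} ∧ M.IsBadSimplex E {a, b, c} ∧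
    Bs ⊆ {a, b} ∪ M.perp {a, b, c} ∧
    ∃ f, f ∉ Bs ∧ M.pDiagram.IsMinSeparator c f Bs

/-- `{x, y}` is a bad 5-edge: `m(x,y) = 5` and every irreducible simplex
properly containing `{x,y}` is of type `G₃` or `G₄`. -/
def IsBad5Edge (M : CoxeterMatrix B) (x y : B) : Prop :=
  x ≠ y ∧ M x y = 5 ∧ ∀ A : Set B, M.IsIrredSimplex A → ({x, y} : Set B) ⊂ A →
    M.IsTypeG3 A ∨ M.IsTypeG4 A

/-- The bad-edge set consisting of the single unordered pair `{x, y}`. -/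
def singleEdge (x y : B) : B → B → Prop :=
  fun u v => (u = x ∧ v = y) ∨ (u = y ∧ v = x)

end CoxeterMatrix

private lemma reach_of_walk_support {V : Type*} (G : SimpleGraph V) {s : Set V} :
    ∀ {u v : V} (w : G.Walk u v), (∀ x ∈ w.support, x ∈ s) →
      ∃ (hu : u ∈ s) (hv : v ∈ s), (G.induce s).Reachable ⟨u, hu⟩ ⟨v, hv⟩ := by
  intro u v w
  induction w with
  | nil => intro h; exact ⟨h _ (by simp), h _ (by simp), .refl _⟩
  | @cons u u' v h p ih =>
    intro hs
    obtain ⟨hu', hv, r⟩ := ih (fun x hx => hs x (by simp [hx]))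
    refine ⟨hs _ (by simp), hv, .trans ?_ r⟩
    exact SimpleGraph.Adj.reachable (by simpa using h)

/-- **Lemma 5.7.** Let `(W,S)` be a Coxeter system with exactly one bad 5-edge. Let
`Bs` be a bad separator with head `A = {a,b,c}`, eyes `{a,b}`, and good focus `f`,
and let `D = {a,b} ∪ A^⊥`. Then the connected component of `Γ(W,S) − Bs` containing
`f` equals the connected component of `Γ(W,S) − D` containing `f`. -/
theorem component_badSep_eq_component_grossSep {B : Type*} (M : CoxeterMatrix B)
    (x y : B) (hxy : M.IsBad5Edge x y) (a b c : B) (hab : M a b = 2)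
    (hA : M.IsMaxIrredSimplex {a, b, c})
    (hbad : M.IsBadSimplex (CoxeterMatrix.singleEdge x y) {a, b, c})
    (Bs : Set B) (ha : a ∈ Bs) (hb : b ∈ Bs) (hc : c ∉ Bs)
    (hsub : Bs ⊆ ({a, b} : Set B) ∪ M.perp {a, b, c})
    (f : B) (hf : f ∉ Bs) (hmin : M.pDiagram.IsMinSeparator c f Bs) :
    {g | M.pDiagram.InSepComp Bs f g} =
      {g | M.pDiagram.InSepComp (({a, b} : Set B) ∪ M.perp {a, b, c}) f g} := by
  classical
  set D : Set B := ({a, b} : Set B) ∪ M.perp {a, b, c} with hD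
  have hBD : Bs ⊆ D := hsub
  obtain ⟨hcB, hfB, hnr⟩ := hmin.1
  ext g
  simp only [Set.mem_setOf_eq, SimpleGraph.InSepComp]
  constructor
  · rintro ⟨hf', hg, r⟩
    obtain ⟨w⟩ := r
    -- every vertex on w avoids D
    have hkey : ∀ z ∈ w.support, (z : B) ∉ D := by
      intro z hz hzD
      have hzBs : (z : B) ∉ Bs := z.2
      have hzperp : (z : B) ∈ M.perp {a, b, c} := by
        rcases hzD with h1 | h2
        · rcases h1 with h1 | h1 <;> simp_all
        · exact h2
      have hzc : M z c = 2 := hzperp c (by simp)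
      have hzc' : (z : B) ≠ c := by
        intro h; rw [h, M.diagonal] at hzc; omega
      have hadj : (M.pDiagram.induce Bsᶜ).Adj ⟨c, hcB⟩ z := by
        refine ⟨Ne.symm hzc', ?_⟩
        show M.M c (z : B) ≠ 0
        rw [M.symmetric, hzc]; omega
      exact hnr (hadj.reachable.trans ((SimpleGraph.Walk.takeUntil w z hz).reachable.symm))
    -- map w to a walk in the full graph
    have hws : ∀ x ∈ (w.map (SimpleGraph.Embedding.induce Bsᶜ).toHom).support, x ∈ Dᶜ := by
      intro x hx
      rw [SimpleGraph.Walk.support_map, List.mem_map] at hx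
      obtain ⟨z, hz, rfl⟩ := hx
      exact hkey z hz
    obtain ⟨hu, hv, r'⟩ := reach_of_walk_support M.pDiagram
      (w.map (SimpleGraph.Embedding.induce Bsᶜ).toHom) hws
    exact ⟨hu, hv, r'⟩
  · rintro ⟨hf', hg, r⟩
    obtain ⟨w⟩ := r
    have hws : ∀ x ∈ (w.map (SimpleGraph.Embedding.induce Dᶜ).toHom).support, x ∈ Bsᶜ := by
      intro x hx
      rw [SimpleGraph.Walk.support_map, List.mem_map] at hx
      obtain ⟨z, hz, rfl⟩ := hx
      exact fun hxB => z.2 (hBD hxB)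
    obtain ⟨hu, hv, r'⟩ := reach_of_walk_support M.pDiagram
      (w.map (SimpleGraph.Embedding.induce Dᶜ).toHom) hws
    exact ⟨hu, hv, r'⟩
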